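/- Let ρ, σ be subnormalized positive semi-definite operators on a finite-dimensional Hilbert space with Tr(λρ) = Tr(λσ) = 1 for some λ ≥ 1. Then P(ρ,σ) ≤ P(λρ, λσ) ≤ sqrt(2λ)·P(ρ,σ), where P is the purified distance defined via the generalized fidelity. -/

import Mathlib

open Matrix Filter
open scoped ComplexOrder Classical Kronecker

variable {n : Type*} [Fintype n] [DecidableEq n]

/-- Square root of a positive semidefinite matrix (0 if not PSD). -/
noncomputable def msqrt (A : Matrix n n ℂ) : Matrix n n ℂ :=
  if h : A.PosSemidef then
    (h.1.eigenvectorUnitary : Matrix n n ℂ) * diagonal ((↑) ∘ (Real.sqrt ∘ h.1.eigenvalues)) *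
      (star h.1.eigenvectorUnitary : Matrix n n ℂ)
  else 0

/-- Trace norm ‖A‖₁ = Tr √(AᴴA). -/
noncomputable def traceNorm (A : Matrix n n ℂ) : ℝ :=
  ((msqrt (Aᴴ * A)).trace).re

/-- Fidelity F(ρ,σ) = ‖√ρ √σ‖₁. -/
noncomputable def fidelity (ρ σ : Matrix n n ℂ) : ℝ :=
  traceNorm (msqrt ρ * msqrt σ)

/-- Purified distance for normalized states. -/
noncomputable def purifiedDist (ρ σ : Matrix n n ℂ) : ℝ :=
  Real.sqrt (1 - (fidelity ρ σ) ^ 2)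

/-- Density operator predicate. -/
def IsDensity (ρ : Matrix n n ℂ) : Prop := ρ.PosSemidef ∧ ρ.trace = 1

/-- Subnormalized state predicate. -/
def IsSubnormalized (ρ : Matrix n n ℂ) : Prop := ρ.PosSemidef ∧ ρ.trace.re ≤ 1

/-- Generalized fidelity for subnormalized states. -/
noncomputable def genFidelity (ρ σ : Matrix n n ℂ) : ℝ :=
  traceNorm (msqrt ρ * msqrt σ) + Real.sqrt ((1 - ρ.trace.re) * (1 - σ.trace.re))

/-- Purified distance via the generalized fidelity. -/
noncomputable def purifiedDistG (ρ σ : Matrix n n ℂ) : ℝ :=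
  Real.sqrt (1 - (genFidelity ρ σ) ^ 2)

/-- Max-relative entropy (base 2). -/
noncomputable def Dmax (ρ σ : Matrix n n ℂ) : ℝ :=
  sInf {l : ℝ | ((2:ℝ) ^ l • σ - ρ).PosSemidef}

/-- Min-relative entropy (base 2). -/
noncomputable def Dmin (ρ σ : Matrix n n ℂ) : ℝ :=
  -Real.logb 2 ((fidelity ρ σ) ^ 2)

/-- ε-ball of subnormalized states around ρ in purified distance. -/
def epsBall (ε : ℝ) (ρ : Matrix n n ℂ) : Set (Matrix n n ℂ) :=
  {ρ' | IsSubnormalized ρ' ∧ purifiedDistG ρ ρ' ≤ ε}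

/-- Matrix logarithm via the hermitian functional calculus (0 if not Hermitian). -/
noncomputable def mlog (A : Matrix n n ℂ) : Matrix n n ℂ :=
  if h : A.IsHermitian then h.cfc Real.log else 0

/-- Quantum relative entropy D(ρ‖σ) = Tr ρ(log ρ − log σ). -/
noncomputable def relEnt (ρ σ : Matrix n n ℂ) : ℝ :=
  ((ρ * (mlog ρ - mlog σ)).trace).re

/-- Relative entropy variance V(ρ‖σ). -/
noncomputable def relVar (ρ σ : Matrix n n ℂ) : ℝ :=
  ((ρ * (mlog ρ - mlog σ) ^ 2).trace).re - (relEnt ρ σ) ^ 2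

/-- Varentropy V(A)_ρ = Tr(ρ (log ρ)²) − (Tr ρ log ρ)². -/
noncomputable def varentropy (ρ : Matrix n n ℂ) : ℝ :=
  ((ρ * (mlog ρ) ^ 2).trace).re - (((ρ * mlog ρ).trace).re) ^ 2

/-- Partial trace over the second (B) register. -/
noncomputable def ptraceB {A B : Type*} [Fintype A] [Fintype B]
    (M : Matrix (A × B) (A × B) ℂ) : Matrix A A ℂ :=
  Matrix.of fun a a' => ∑ b, M (a, b) (a', b)

/-- Partial trace over the first (A) register. -/
noncomputable def ptraceA {A B : Type*} [Fintype A] [Fintype B]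
    (M : Matrix (A × B) (A × B) ℂ) : Matrix B B ℂ :=
  Matrix.of fun b b' => ∑ a, M (a, b) (a, b')

section AuxStmt8

set_option linter.unusedSectionVars false

open scoped MatrixOrder

lemma real_smul_eq_aux8 (c : ℝ) (A : Matrix n n ℂ) : c • A = (c : ℂ) • A := by
  ext i j; simp [Matrix.smul_apply, Complex.real_smul]

lemma psd_smul_aux8 {A : Matrix n n ℂ} (hA : A.PosSemidef) {c : ℝ} (hc : 0 ≤ c) :
    ((c : ℝ) • A).PosSemidef := by
  rw [real_smul_eq_aux8]
  exact hA.smul (by exact_mod_cast hc)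

lemma psd_trace_re_nonneg_aux8 {A : Matrix n n ℂ} (hA : A.PosSemidef) : 0 ≤ A.trace.re := by
  simpa using (Complex.le_def.mp hA.trace_nonneg).1

lemma msqrt_of_psd_aux8 {A : Matrix n n ℂ} (hA : A.PosSemidef) : msqrt A = CFC.sqrt A := by
  rw [msqrt, dif_pos hA, CFC.sqrt_eq_real_sqrt A (nonneg_iff_posSemidef.mpr hA),
    cfcₙ_eq_cfc (hf := Real.continuous_sqrt.continuousOn) (hf0 := Real.sqrt_zero), hA.1.cfc_eq]
  simp [IsHermitian.cfc, Function.comp_def]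

lemma msqrt_smul_aux8 {A : Matrix n n ℂ} (hA : A.PosSemidef) {c : ℝ} (hc : 0 ≤ c) :
    msqrt ((c : ℝ) • A) = Real.sqrt c • msqrt A := by
  rw [msqrt_of_psd_aux8 (psd_smul_aux8 hA hc), msqrt_of_psd_aux8 hA]
  symm
  refine (CFC.sqrt_unique (hb := nonneg_iff_posSemidef.mpr
    (psd_smul_aux8 (nonneg_iff_posSemidef.mp (CFC.sqrt_nonneg A)) (Real.sqrt_nonneg c))) ?_).symm
  rw [smul_mul_smul_comm, CFC.sqrt_mul_sqrt_self A (nonneg_iff_posSemidef.mpr hA),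
    Real.mul_self_sqrt hc]

lemma traceNorm_smul_aux8 (A : Matrix n n ℂ) {c : ℝ} (hc : 0 ≤ c) :
    traceNorm ((c : ℝ) • A) = c * traceNorm A := by
  unfold traceNorm
  have h1 : ((c:ℝ) • A)ᴴ * ((c:ℝ) • A) = (c * c : ℝ) • (Aᴴ * A) := by
    rw [real_smul_eq_aux8, real_smul_eq_aux8 (c*c), conjTranspose_smul, Complex.star_def,
      Complex.conj_ofReal, smul_mul_smul_comm]
    push_cast; ring_nf
  rw [h1, msqrt_smul_aux8 (Matrix.posSemidef_conjTranspose_mul_self A) (mul_nonneg hc hc),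
    Real.sqrt_mul_self hc, trace_smul, Complex.smul_re, smul_eq_mul]

lemma traceNorm_nonneg_aux8 (A : Matrix n n ℂ) : 0 ≤ traceNorm A := by
  unfold traceNorm
  rw [msqrt_of_psd_aux8 (Matrix.posSemidef_conjTranspose_mul_self A)]
  exact psd_trace_re_nonneg_aux8
    (nonneg_iff_posSemidef.mp (CFC.sqrt_nonneg _))

lemma key_algebra_aux8 (l F : ℝ) (hl : 1 ≤ l) (hF : 0 ≤ F) :
    Real.sqrt (1 - (F + (1 - 1/l))^2) ≤ Real.sqrt (1 - (l*F)^2) ∧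
      Real.sqrt (1 - (l*F)^2) ≤ Real.sqrt (2*l) * Real.sqrt (1 - (F + (1 - 1/l))^2) := by
  have hl0 : 0 < l := lt_of_lt_of_le one_pos hl
  have hinv : 1/l ≤ 1 := by rw [div_le_one hl0]; exact hl
  obtain ⟨a, ha_def⟩ : ∃ a : ℝ, 1 - 1/l = a := ⟨_, rfl⟩
  have hal : l * a = l - 1 := by rw [← ha_def]; field_simp
  have ha : 0 ≤ a := by linarith
  rw [ha_def]
  rcases le_or_gt F (1/l) with h | h
  · have h3 : l * F ≤ F + a := by
      have : l * F ≤ 1 := by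
        calc l * F ≤ l * (1/l) := by nlinarith
        _ = 1 := by field_simp
      nlinarith
    have h4 : l * F ≤ 1 := by
      calc l * F ≤ l * (1/l) := by nlinarith
      _ = 1 := by field_simp
    constructor
    · apply Real.sqrt_le_sqrt
      nlinarith [mul_nonneg (sub_nonneg.2 h3)
        (add_nonneg (add_nonneg hF ha) (mul_nonneg hl0.le hF))]
    · rw [← Real.sqrt_mul (by positivity)]
      apply Real.sqrt_le_sqrt
      nlinarith [mul_nonneg (sub_nonneg.2 h4)
        (by nlinarith : (0:ℝ) ≤ 1 + 2*F + 2*a - l*F)]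
  · have h5 : 1 ≤ F + a := by
      have : 1/l ≤ F := le_of_lt h
      linarith
    have h6 : 1 ≤ l * F := by
      have := mul_lt_mul_of_pos_left h hl0
      rw [mul_one_div, div_self (ne_of_gt hl0)] at this
      linarith
    have e1 : Real.sqrt (1 - (F + a)^2) = 0 := by
      rw [Real.sqrt_eq_zero']
      nlinarith
    constructor
    · rw [e1]; exact Real.sqrt_nonneg _
    · have e2 : Real.sqrt (1 - (l*F)^2) = 0 := by
        rw [Real.sqrt_eq_zero']
        nlinarith
      rw [e1, e2, mul_zero]

end AuxStmt8


theorem stmt_8 (ρ σ : Matrix n n ℂ) (hρ : ρ.PosSemidef) (hσ : σ.PosSemidef)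
    (l : ℝ) (hl : 1 ≤ l) (h1 : l * ρ.trace.re = 1) (h2 : l * σ.trace.re = 1) :
    purifiedDistG ρ σ ≤ purifiedDistG (l • ρ) (l • σ) ∧
      purifiedDistG (l • ρ) (l • σ) ≤ Real.sqrt (2 * l) * purifiedDistG ρ σ := by
  have hl0 : 0 < l := lt_of_lt_of_le one_pos hl
  have hF0 : 0 ≤ traceNorm (msqrt ρ * msqrt σ) := traceNorm_nonneg_aux8 _
  have htρ : ρ.trace.re = 1/l := by
    rw [eq_div_iff hl0.ne']; linarith [h1]
  have htσ : σ.trace.re = 1/l := by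
    rw [eq_div_iff hl0.ne']; linarith [h2]
  have hinv : (0:ℝ) ≤ 1 - 1/l := by
    have : 1/l ≤ 1 := by rw [div_le_one hl0]; exact hl
    linarith
  have hgF : genFidelity ρ σ = traceNorm (msqrt ρ * msqrt σ) + (1 - 1/l) := by
    unfold genFidelity
    rw [htρ, htσ, Real.sqrt_mul_self hinv]
  have hsm : msqrt (l • ρ) * msqrt (l • σ) = (l:ℝ) • (msqrt ρ * msqrt σ) := by
    rw [msqrt_smul_aux8 hρ hl0.le, msqrt_smul_aux8 hσ hl0.le, smul_mul_smul_comm,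
      Real.mul_self_sqrt hl0.le]
  have htrρ : (l • ρ).trace.re = 1 := by rw [trace_smul, Complex.smul_re, smul_eq_mul, h1]
  have htrσ : (l • σ).trace.re = 1 := by rw [trace_smul, Complex.smul_re, smul_eq_mul, h2]
  have hgF2 : genFidelity (l • ρ) (l • σ) = l * traceNorm (msqrt ρ * msqrt σ) := by
    unfold genFidelity
    rw [hsm, traceNorm_smul_aux8 _ hl0.le, htrρ, htrσ]
    simp
  unfold purifiedDistG
  rw [hgF, hgF2]
  exact key_algebra_aux8 l _ hl hF0
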